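/- Let (R, m) be a Noetherian local ring, let I be an ideal of R of finite colength, let f ∈ R with r = r_f(I) < ∞, and let φ_{f,I} : R/I → R/I be the R-linear map given by multiplication by f. Then equality ℓ(R/I) = r · ℓ(R/(⟨f⟩ + I)) holds if and only if ker(φ_{f,I}) = (⟨f^{r-1}⟩ + I)/I, the image in R/I of the ideal generated by f^{r-1}. -/

import Mathlib

/-- The length of an `R`-module `M`: the supremum of lengths of strictly increasing
chains of submodules of `M` (i.e. the Krull dimension of the submodule lattice),
viewed in `ℕ∞`. -/
noncomputable def moduleLength (R M : Type*) [Ring R] [AddCommGroup M] [Module R M] : ℕ∞ :=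
  (Order.krullDim (Submodule R M)).unbotD 0

open Order

section OrderLemmas
variable {α : Type*}


lemma height_mk_le_height [Preorder α] (s : Set α) (x : s) :
    Order.height x ≤ Order.height (x : α) :=
  Order.height_le_height_apply_of_strictMono (fun y : s => (y : α)) (fun _ _ h => h) x

/-- A series ending at `a` lives in `Set.Iic a`. -/
lemma height_top_Iic [PartialOrder α] (a : α) :
    Order.height (⟨a, le_refl a⟩ : Set.Iic a) = Order.height a := by
  refine le_antisymm (height_mk_le_height _ _) (Order.height_le fun p hp => ?_)
  let q : LTSeries (Set.Iic a) :=
    ⟨p.length, fun i => ⟨p i, (p.monotone (Fin.le_last i)).trans hp.le⟩,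
      fun i => by exact p.step i⟩
  have hq : q.last = (⟨a, le_refl a⟩ : Set.Iic a) := Subtype.ext hp
  simpa [← hq] using Order.length_le_height_last (p := q)

lemma coheight_mk_le_coheight [Preorder α] (s : Set α) (x : s) :
    Order.coheight x ≤ Order.coheight (x : α) :=
  Order.coheight_le_coheight_apply_of_strictMono (fun y : s => (y : α)) (fun _ _ h => h) x

lemma coheight_bot_Ici [PartialOrder α] (a : α) :
    Order.coheight (⟨a, le_refl a⟩ : Set.Ici a) = Order.coheight a := by
  refine le_antisymm (coheight_mk_le_coheight _ _) (Order.coheight_le fun p hp => ?_)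
  let q : LTSeries (Set.Ici a) :=
    ⟨p.length, fun i => ⟨p i, hp.ge.trans (p.monotone (Fin.zero_le i))⟩,
      fun i => by exact p.step i⟩
  have hq : q.head = (⟨a, le_refl a⟩ : Set.Ici a) := Subtype.ext hp
  simpa [← hq] using Order.length_le_coheight_head (p := q)

/-- In `Set.Ici a`, the height of a top element `⟨⊤⟩` is the coheight of `a`. -/
lemma height_mk_top_Ici [PartialOrder α] [OrderTop α] (a : α) :
    Order.height (⟨⊤, le_top⟩ : Set.Ici a) = Order.coheight a := by
  apply le_antisymm
  · refine Order.height_le fun p _hp => ?_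
    let q : LTSeries α := ⟨p.length, fun i => p i, fun i => p.step i⟩
    have : a ≤ q.head := (p.head).2
    simpa using Order.length_le_coheight (x := a) (p := q) this
  · refine Order.coheight_le fun p hp => ?_
    let q : LTSeries (Set.Ici a) :=
      ⟨p.length, fun i => ⟨p i, hp ▸ p.monotone (Fin.zero_le i)⟩,
        fun i => by exact p.step i⟩
    exact Order.length_le_height (x := (⟨⊤, le_top⟩ : Set.Ici a)) (p := q) le_top

lemma key_mod [Lattice α] [IsModularLattice α] (a : α) (p : LTSeries α) :
    (p.length : ℕ∞) ≤
      Order.height (⟨p.last ⊓ a, inf_le_right⟩ : Set.Iic a)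
        + Order.height (⟨p.last ⊔ a, le_sup_right⟩ : Set.Ici a) := by
  generalize h : p.length = n at *
  induction n generalizing p with
  | zero => simp
  | succ n ih =>
    set q := p.eraseLast with hqdef
    have hq : q.length = n := by simp [hqdef, RelSeries.eraseLast_length, h]
    have hlt : q.last < p.last := p.eraseLast_last_rel_last (by omega)
    have IH := ih q hq
    rcases eq_or_ne (Order.height (⟨p.last ⊓ a, inf_le_right⟩ : Set.Iic a)
        + Order.height (⟨p.last ⊔ a, le_sup_right⟩ : Set.Ici a)) ⊤ with htop | htop
    · rw [htop]; exact le_top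
    have hfin1 : Order.height (⟨p.last ⊓ a, inf_le_right⟩ : Set.Iic a) < ⊤ :=
      lt_top_iff_ne_top.mpr (fun hh => htop (by simp [hh]))
    have hfin2 : Order.height (⟨p.last ⊔ a, le_sup_right⟩ : Set.Ici a) < ⊤ :=
      lt_top_iff_ne_top.mpr (fun hh => htop (by simp [hh]))
    have hmono1 : Order.height (⟨q.last ⊓ a, inf_le_right⟩ : Set.Iic a)
        ≤ Order.height (⟨p.last ⊓ a, inf_le_right⟩ : Set.Iic a) :=
      Order.height_mono (by exact Subtype.mk_le_mk.mpr (inf_le_inf_right a hlt.le))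
    have hmono2 : Order.height (⟨q.last ⊔ a, le_sup_right⟩ : Set.Ici a)
        ≤ Order.height (⟨p.last ⊔ a, le_sup_right⟩ : Set.Ici a) :=
      Order.height_mono (by exact Subtype.mk_le_mk.mpr (sup_le_sup_right hlt.le a))
    by_cases hc : q.last ⊓ a < p.last ⊓ a
    · have hstrict : Order.height (⟨q.last ⊓ a, inf_le_right⟩ : Set.Iic a)
          < Order.height (⟨p.last ⊓ a, inf_le_right⟩ : Set.Iic a) :=
        Order.height_strictMono (Subtype.mk_lt_mk.mpr hc) (lt_of_le_of_lt hmono1 hfin1)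
      have h1 : Order.height (⟨q.last ⊓ a, inf_le_right⟩ : Set.Iic a) + 1
          ≤ Order.height (⟨p.last ⊓ a, inf_le_right⟩ : Set.Iic a) :=
        Order.add_one_le_of_lt hstrict
      calc ((n + 1 : ℕ) : ℕ∞) = (n : ℕ∞) + 1 := by push_cast; ring
        _ ≤ (Order.height (⟨q.last ⊓ a, inf_le_right⟩ : Set.Iic a)
              + Order.height (⟨q.last ⊔ a, le_sup_right⟩ : Set.Ici a)) + 1 := by
            exact add_le_add_left IH 1
        _ = (Order.height (⟨q.last ⊓ a, inf_le_right⟩ : Set.Iic a) + 1)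
              + Order.height (⟨q.last ⊔ a, le_sup_right⟩ : Set.Ici a) := by ring
        _ ≤ _ := add_le_add h1 hmono2
    · have heq : p.last ⊓ a ≤ q.last ⊓ a := by
        rcases (inf_le_inf_right a hlt.le).lt_or_eq with h' | h'
        · exact absurd h' hc
        · exact h'.ge
      have hsup : q.last ⊔ a < p.last ⊔ a :=
        sup_lt_sup_of_lt_of_inf_le_inf hlt heq
      have hstrict : Order.height (⟨q.last ⊔ a, le_sup_right⟩ : Set.Ici a)
          < Order.height (⟨p.last ⊔ a, le_sup_right⟩ : Set.Ici a) :=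
        Order.height_strictMono (Subtype.mk_lt_mk.mpr hsup) (lt_of_le_of_lt hmono2 hfin2)
      have h1 : Order.height (⟨q.last ⊔ a, le_sup_right⟩ : Set.Ici a) + 1
          ≤ Order.height (⟨p.last ⊔ a, le_sup_right⟩ : Set.Ici a) :=
        Order.add_one_le_of_lt hstrict
      calc ((n + 1 : ℕ) : ℕ∞) = (n : ℕ∞) + 1 := by push_cast; ring
        _ ≤ (Order.height (⟨q.last ⊓ a, inf_le_right⟩ : Set.Iic a)
              + Order.height (⟨q.last ⊔ a, le_sup_right⟩ : Set.Ici a)) + 1 := by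
            exact add_le_add_left IH 1
        _ = Order.height (⟨q.last ⊓ a, inf_le_right⟩ : Set.Iic a)
              + (Order.height (⟨q.last ⊔ a, le_sup_right⟩ : Set.Ici a) + 1) := by ring
        _ ≤ _ := add_le_add hmono1 h1

lemma height_top_add [Lattice α] [BoundedOrder α] [IsModularLattice α] (a : α) :
    Order.height (⊤ : α) = Order.height a + Order.coheight a := by
  apply le_antisymm
  · refine Order.height_le fun p hp => ?_
    have := key_mod a p
    rw [hp] at this
    have e1 : (⟨(⊤ : α) ⊓ a, inf_le_right⟩ : Set.Iic a) = ⟨a, le_refl a⟩ :=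
      Subtype.ext (top_inf_eq a)
    have e2 : (⟨(⊤ : α) ⊔ a, le_sup_right⟩ : Set.Ici a) = ⟨⊤, le_top⟩ :=
      Subtype.ext (top_sup_eq a)
    rw [e1, e2, height_top_Iic, height_mk_top_Ici] at this
    exact this
  · have h1 := Order.krullDim_eq_iSup_height_add_coheight_of_nonempty (α := α)
    have h2 := Order.height_top_eq_krullDim (α := α)
    rw [← h2] at h1
    have h3 : Order.height (⊤ : α) = ⨆ (b : α), Order.height b + Order.coheight b :=
      WithBot.coe_injective h1
    rw [h3]
    exact le_iSup (fun b => Order.height b + Order.coheight b) a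

lemma krullDim_Iic [PartialOrder α] (a : α) :
    Order.krullDim (Set.Iic a) = (Order.height a : ℕ∞) := by
  rw [← Order.height_top_eq_krullDim, ← height_top_Iic a]
  rfl

lemma krullDim_Ici [PartialOrder α] (a : α) :
    Order.krullDim (Set.Ici a) = (Order.coheight a : ℕ∞) := by
  rw [← Order.coheight_bot_eq_krullDim, ← coheight_bot_Ici a]
  rfl

variable {R M N : Type*} [Ring R] [AddCommGroup M] [Module R M] [AddCommGroup N] [Module R N]

lemma moduleLength_eq_height_top :
    moduleLength R M = Order.height (⊤ : Submodule R M) := by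
  rw [moduleLength, ← Order.height_top_eq_krullDim, WithBot.unbotD_coe]

lemma moduleLength_congr (e : M ≃ₗ[R] N) : moduleLength R M = moduleLength R N := by
  rw [moduleLength, moduleLength,
    Order.krullDim_eq_of_orderIso (Submodule.orderIsoMapComap e)]

lemma moduleLength_submodule (P : Submodule R M) :
    moduleLength R P = Order.height P := by
  rw [moduleLength, Order.krullDim_eq_of_orderIso (Submodule.MapSubtype.orderIso P)]
  have : Order.krullDim {p' : Submodule R M // p' ≤ P} = Order.krullDim (Set.Iic P) := rfl
  rw [this, krullDim_Iic, WithBot.unbotD_coe]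

lemma moduleLength_quotient (P : Submodule R M) :
    moduleLength R (M ⧸ P) = Order.coheight P := by
  rw [moduleLength, Order.krullDim_eq_of_orderIso (Submodule.comapMkQRelIso P)]
  have : Order.krullDim {p' : Submodule R M // P ≤ p'} = Order.krullDim (Set.Ici P) := rfl
  rw [krullDim_Ici, WithBot.unbotD_coe]

end OrderLemmas

section ModuleLemmas
variable {R M N : Type*} [Ring R] [AddCommGroup M] [Module R M] [AddCommGroup N] [Module R N]

lemma moduleLength_eq_zero [Subsingleton M] : moduleLength R M = 0 := by
  rw [moduleLength_eq_height_top, Order.height_eq_zero]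
  intro P _
  have : Subsingleton (Submodule R M) := by
    constructor; intro a b
    ext x
    simp [Subsingleton.elim x (0 : M)]
  exact le_of_eq (Subsingleton.elim _ _)

lemma one_le_moduleLength [Nontrivial M] : 1 ≤ moduleLength R M := by
  rw [moduleLength_eq_height_top, ENat.one_le_iff_ne_zero]
  rw [Ne, Order.height_eq_zero]
  intro h
  have h2 : (⊤ : Submodule R M) ≤ ⊥ := h bot_le
  simp only [le_bot_iff] at h2
  exact bot_ne_top h2.symm

theorem moduleLength_add (P : Submodule R M) :
    moduleLength R M = moduleLength R ↥P + moduleLength R (M ⧸ P) := by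
  rw [moduleLength_eq_height_top, moduleLength_submodule, moduleLength_quotient]
  exact height_top_add P

end ModuleLemmas

section IdealLemmas
variable {R : Type*} [CommRing R] (I : Ideal R) (f : R) (r : ℕ)


lemma lambda_decomp (K K' : Ideal R) (h : K ≤ K') :
    moduleLength R (R ⧸ K)
      = moduleLength R ↥(Submodule.map K.mkQ K') + moduleLength R (R ⧸ K') := by
  rw [moduleLength_add (Submodule.map K.mkQ K')]
  congr 1
  refine moduleLength_congr (((Submodule.quotientQuotientEquivQuotientSup K K')).trans
    (Submodule.quotEquivOfEq _ _ (sup_eq_right.mpr h)))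

lemma lambda_anti (K K' : Ideal R) (h : K ≤ K') :
    moduleLength R (R ⧸ K') ≤ moduleLength R (R ⧸ K) := by
  rw [lambda_decomp K K' h]; exact le_add_self

lemma lambda_strict (K K' : Ideal R) (h : K < K')
    (hfin : moduleLength R (R ⧸ K) ≠ ⊤) :
    moduleLength R (R ⧸ K') < moduleLength R (R ⧸ K) := by
  rw [lambda_decomp K K' h.le] at hfin ⊢
  have hN : Nontrivial ↥(Submodule.map K.mkQ K') := by
    obtain ⟨x, hx', hx⟩ := SetLike.exists_of_lt h
    refine ⟨⟨⟨K.mkQ x, Submodule.mem_map_of_mem hx'⟩, 0, ?_⟩⟩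
    intro hc
    apply hx
    have : K.mkQ x = 0 := by simpa using congrArg Subtype.val hc
    rwa [Submodule.mkQ_apply, Submodule.Quotient.mk_eq_zero] at this
  have h1 : 1 ≤ moduleLength R ↥(Submodule.map K.mkQ K') := one_le_moduleLength
  set a := moduleLength R ↥(Submodule.map K.mkQ K')
  set b := moduleLength R (R ⧸ K')
  have hb : b ≠ ⊤ := fun hb => hfin (by simp [hb])
  have ha0 : a ≠ 0 := fun ha => by simp [ha] at h1
  have : b + 0 < b + a := WithTop.add_lt_add_left hb (show (0 : ℕ∞) < a from pos_iff_ne_zero.mpr ha0)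
  rw [add_zero] at this
  calc b < b + a := this
    _ = a + b := add_comm _ _

lemma lambda_step (K : Ideal R) (x : R) :
    moduleLength R (R ⧸ K) =
      moduleLength R (R ⧸ Submodule.colon K (Ideal.span {x}))
        + moduleLength R (R ⧸ (Ideal.span {x} ⊔ K)) := by
  have h1 := moduleLength_add (R := R) (M := R ⧸ K) (Submodule.span R {K.mkQ x})
  have hmap : Submodule.map K.mkQ (Ideal.span {x}) = Submodule.span R {K.mkQ x} := by
    rw [Ideal.span, Submodule.map_span, Set.image_singleton]
  have etor : Ideal.torsionOf R (R ⧸ K) (K.mkQ x) = Submodule.colon K (Ideal.span {x}) := by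
    ext r
    rw [Ideal.mem_torsionOf_iff, ← Ideal.submodule_span_eq, Submodule.mem_colon_span_singleton]
    rw [← map_smul, Submodule.mkQ_apply, Submodule.Quotient.mk_eq_zero, smul_eq_mul]
  have e1 : moduleLength R ↥(Submodule.span R {K.mkQ x})
      = moduleLength R (R ⧸ Submodule.colon K (Ideal.span {x})) := by
    rw [← etor]
    exact (moduleLength_congr (Ideal.quotTorsionOfEquivSpanSingleton R _ (K.mkQ x))).symm
  have e2 : moduleLength R ((R ⧸ K) ⧸ (Submodule.span R ({K.mkQ x} : Set (R ⧸ K))))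
      = moduleLength R (R ⧸ (Ideal.span {x} ⊔ K)) := by
    rw [← hmap]
    refine moduleLength_congr ((Submodule.quotientQuotientEquivQuotientSup K _).trans
      (Submodule.quotEquivOfEq _ _ (sup_comm _ _)))
  rw [h1, e1, e2]


lemma mem_colon_pow {K : Ideal R} {x : R} {k : ℕ} :
    x ∈ Submodule.colon K (Ideal.span {f ^ k}) ↔ x * f ^ k ∈ K := by
  rw [← Ideal.submodule_span_eq, Submodule.mem_colon_span_singleton, smul_eq_mul]

lemma alg1 (hr : 1 ≤ r)
    (hB : Submodule.colon I (Ideal.span {f}) ≤ Ideal.span {f ^ (r - 1)} ⊔ I) :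
    ∀ k, 1 ≤ k → k ≤ r →
      Submodule.colon I (Ideal.span {f ^ k}) ≤ Ideal.span {f ^ (r - k)} ⊔ I := by
  intro k
  induction k with
  | zero => omega
  | succ k ih =>
    intro _ hk1 x hx
    rw [mem_colon_pow] at hx
    rcases Nat.eq_zero_or_pos k with hk0 | hk0
    · subst hk0
      have := hB (by rw [← Ideal.submodule_span_eq, Submodule.mem_colon_span_singleton, smul_eq_mul]
                     simpa [pow_one] using hx)
      simpa using this
    · have hx' : (x * f) * f ^ k ∈ I := by
        have : x * f ^ (k + 1) = x * f * f ^ k := by ring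
        rwa [this] at hx
      have h1 : x * f ∈ Ideal.span {f ^ (r - k)} ⊔ I :=
        ih hk0 (by omega) (mem_colon_pow f |>.mpr hx')
      obtain ⟨y, i, hi, hyi⟩ := Ideal.mem_span_singleton_sup.mp h1
      have hrk : r - k = (r - (k + 1)) + 1 := by omega
      have h2 : (x - y * f ^ (r - (k + 1))) * f ∈ I := by
        have : (x - y * f ^ (r - (k + 1))) * f = x * f - y * f ^ (r - k) := by
          rw [hrk]; ring
        rw [this, ← hyi]
        simpa using hi
      have h3 : x - y * f ^ (r - (k + 1)) ∈ Ideal.span {f ^ (r - 1)} ⊔ I :=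
        hB (by rw [← Ideal.submodule_span_eq, Submodule.mem_colon_span_singleton, smul_eq_mul]
               exact h2)
      have h4 : Ideal.span {f ^ (r - 1)} ⊔ I ≤ Ideal.span {f ^ (r - (k + 1))} ⊔ I := by
        refine sup_le_sup_right ?_ I
        rw [Ideal.span_singleton_le_span_singleton]
        exact ⟨f ^ k, by rw [← pow_add]; congr 1; omega⟩
      obtain ⟨z, j, hj, hzj⟩ := Ideal.mem_span_singleton_sup.mp (h4 h3)
      refine Ideal.mem_span_singleton_sup.mpr ⟨y + z, j, hj, ?_⟩
      have : (y + z) * f ^ (r - (k + 1)) + j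
          = y * f ^ (r - (k + 1)) + (z * f ^ (r - (k + 1)) + j) := by ring
      rw [this, hzj]; ring

lemma alg2 (hr : 1 ≤ r) (hfr : f ^ r ∈ I)
    (hB : Submodule.colon I (Ideal.span {f}) ≤ Ideal.span {f ^ (r - 1)} ⊔ I) :
    ∀ k, k < r →
      Submodule.colon (Ideal.span {f ^ (k + 1)} ⊔ I) (Ideal.span {f ^ k})
        ≤ Ideal.span {f} ⊔ I := by
  intro k hk x hx
  rw [mem_colon_pow] at hx
  obtain ⟨y, i, hi, hyi⟩ := Ideal.mem_span_singleton_sup.mp hx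
  have h1 : (x - y * f) * f ^ k ∈ I := by
    have : (x - y * f) * f ^ k = x * f ^ k - y * f ^ (k + 1) := by ring
    rw [this, ← hyi]; simpa using hi
  rcases Nat.eq_zero_or_pos k with hk0 | hk0
  · subst hk0
    simp only [pow_zero, mul_one] at h1
    refine Ideal.mem_span_singleton_sup.mpr ⟨y, x - y * f, h1, by ring⟩
  · have h2 : x - y * f ∈ Ideal.span {f ^ (r - k)} ⊔ I :=
      alg1 I f r hr hB k hk0 (by omega) (mem_colon_pow f |>.mpr h1)
    have h3 : Ideal.span {f ^ (r - k)} ⊔ I ≤ Ideal.span {f} ⊔ I := by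
      refine sup_le_sup_right ?_ I
      rw [Ideal.span_singleton_le_span_singleton]
      exact ⟨f ^ (r - k - 1), by rw [← pow_succ']; congr 1; omega⟩
    obtain ⟨z, j, hj, hzj⟩ := Ideal.mem_span_singleton_sup.mp (h3 h2)
    refine Ideal.mem_span_singleton_sup.mpr ⟨y + z, j, hj, ?_⟩
    have : (y + z) * f + j = y * f + (z * f + j) := by ring
    rw [this, hzj]; ring

lemma alg3 (hr : 1 ≤ r)
    (hconds : ∀ k, k < r →
      Submodule.colon (Ideal.span {f ^ (k + 1)} ⊔ I) (Ideal.span {f ^ k})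
        ≤ Ideal.span {f} ⊔ I) :
    Submodule.colon I (Ideal.span {f}) ≤ Ideal.span {f ^ (r - 1)} ⊔ I := by
  intro x hx
  rw [← Ideal.submodule_span_eq, Submodule.mem_colon_span_singleton, smul_eq_mul] at hx
  suffices claim : ∀ k, k ≤ r - 1 → x ∈ Ideal.span {f ^ k} ⊔ I from claim (r - 1) le_rfl
  intro k
  induction k with
  | zero =>
    intro _
    rw [pow_zero, Ideal.span_singleton_one]
    simp
  | succ k ih =>
    intro hk
    obtain ⟨y, i, hi, hyi⟩ := Ideal.mem_span_singleton_sup.mp (ih (by omega))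
    have h1 : y * f ^ (k + 1) ∈ I := by
      have : y * f ^ (k + 1) = (y * f ^ k) * f := by ring
      rw [this]
      have hyf : y * f ^ k = x - i := by rw [← hyi]; ring
      rw [hyf, sub_mul]
      exact I.sub_mem hx (I.mul_mem_right f hi)
    have h2 : y ∈ Submodule.colon (Ideal.span {f ^ (k + 2)} ⊔ I) (Ideal.span {f ^ (k + 1)}) := by
      rw [mem_colon_pow]
      exact Submodule.mem_sup_right h1
    have h3 : y ∈ Ideal.span {f} ⊔ I := hconds (k + 1) (by omega) h2
    obtain ⟨z, j, hj, hzj⟩ := Ideal.mem_span_singleton_sup.mp h3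
    refine Ideal.mem_span_singleton_sup.mpr
      ⟨z, j * f ^ k + i, I.add_mem (I.mul_mem_right _ hj) hi, ?_⟩
    have : z * f ^ (k + 1) + (j * f ^ k + i) = (z * f + j) * f ^ k + i := by ring
    rw [this, hzj, hyi]

lemma hJ1C : ∀ k : ℕ, Ideal.span {f} ⊔ I ≤
    Submodule.colon (Ideal.span {f ^ (k + 1)} ⊔ I) (Ideal.span {f ^ k}) := by
  intro k x hx
  obtain ⟨y, i, hi, hyi⟩ := Ideal.mem_span_singleton_sup.mp hx
  rw [mem_colon_pow]
  have : x * f ^ k = y * f ^ (k + 1) + i * f ^ k := by rw [← hyi]; ring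
  rw [this]
  exact Submodule.add_mem _
    (Submodule.mem_sup_left (Ideal.mem_span_singleton.mpr ⟨y, by ring⟩))
    (Submodule.mem_sup_right (I.mul_mem_right _ hi))

lemma hBI (hr : 1 ≤ r) (hfr : f ^ r ∈ I) :
    Ideal.span {f ^ (r - 1)} ⊔ I ≤ Submodule.colon I (Ideal.span {f}) := by
  intro x hx
  obtain ⟨y, i, hi, hyi⟩ := Ideal.mem_span_singleton_sup.mp hx
  rw [← Ideal.submodule_span_eq, Submodule.mem_colon_span_singleton, smul_eq_mul]
  have : x * f = y * f ^ r + i * f := by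
    rw [← hyi]
    have hr2 : r = (r - 1) + 1 := by omega
    calc (y * f ^ (r - 1) + i) * f = y * (f ^ (r - 1) * f) + i * f := by ring
      _ = y * f ^ r + i * f := by rw [← pow_succ, ← hr2]
  rw [this]
  exact I.add_mem (I.mul_mem_left y hfr) (I.mul_mem_right f hi)


lemma ker_eq_map_colon (φ : (R ⧸ I) →ₗ[R] (R ⧸ I))
    (hφ : ∀ g : R, φ (Ideal.Quotient.mk I g) = Ideal.Quotient.mk I (f * g)) :
    LinearMap.ker φ = Submodule.map I.mkQ (Submodule.colon I (Ideal.span {f})) := by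
  ext x
  obtain ⟨g, rfl⟩ := Submodule.Quotient.mk_surjective I x
  have hmk : (Submodule.Quotient.mk g : R ⧸ I) = Ideal.Quotient.mk I g := rfl
  constructor
  · intro hg
    rw [LinearMap.mem_ker, hmk, hφ] at hg
    refine Submodule.mem_map.mpr ⟨g, ?_, rfl⟩
    rw [← Ideal.submodule_span_eq, Submodule.mem_colon_span_singleton, smul_eq_mul]
    rw [Ideal.Quotient.eq_zero_iff_mem] at hg
    rwa [mul_comm]
  · intro hg
    obtain ⟨h, hh, hhx⟩ := Submodule.mem_map.mp hg
    rw [← Ideal.submodule_span_eq, Submodule.mem_colon_span_singleton, smul_eq_mul] at hh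
    rw [LinearMap.mem_ker, ← hhx]
    have : I.mkQ h = Ideal.Quotient.mk I h := rfl
    rw [this, hφ, Ideal.Quotient.eq_zero_iff_mem, mul_comm]
    exact hh

lemma map_mkQ_inj (K K' : Ideal R) (hK : I ≤ K) (hK' : I ≤ K')
    (h : Submodule.map I.mkQ K = Submodule.map I.mkQ K') : K = K' := by
  have h1 := congrArg (Submodule.comap I.mkQ) h
  rwa [Submodule.comap_map_mkQ, Submodule.comap_map_mkQ, sup_eq_right.mpr hK,
    sup_eq_right.mpr hK'] at h1

lemma map_span_sup_eq :
    Submodule.map I.mkQ (Ideal.span {f} ⊔ I) = Submodule.map I.mkQ (Ideal.span {f}) := by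
  rw [Submodule.map_sup]
  have : Submodule.map I.mkQ I = ⊥ := by
    rw [eq_bot_iff, Submodule.map_le_iff_le_comap, Submodule.comap_bot, Submodule.ker_mkQ]
  rw [this, sup_bot_eq]


lemma span_pow_sup_step (I : Ideal R) (f : R) (m : ℕ) :
    Ideal.span {f ^ m} ⊔ (Ideal.span {f ^ (m + 1)} ⊔ I) = Ideal.span {f ^ m} ⊔ I := by
  rw [← sup_assoc]
  congr 1
  exact sup_eq_left.mpr (Ideal.span_singleton_le_span_singleton.mpr ⟨f, pow_succ f m⟩)

lemma lambda_sum (I : Ideal R) (f : R) (r : ℕ) (hfr : f ^ r ∈ I) :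
    moduleLength R (R ⧸ I) = ∑ k ∈ Finset.range r,
      moduleLength R (R ⧸ Submodule.colon (Ideal.span {f ^ (k + 1)} ⊔ I)
        (Ideal.span {f ^ k})) := by
  have key : ∀ m, moduleLength R (R ⧸ (Ideal.span {f ^ m} ⊔ I))
      = ∑ k ∈ Finset.range m,
        moduleLength R (R ⧸ Submodule.colon (Ideal.span {f ^ (k + 1)} ⊔ I)
          (Ideal.span {f ^ k})) := by
    intro m
    induction m with
    | zero =>
      have h0 : Ideal.span {f ^ 0} ⊔ I = ⊤ := by
        rw [pow_zero, Ideal.span_singleton_one, top_sup_eq]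
      rw [Finset.range_zero, Finset.sum_empty, h0]
      haveI : Subsingleton (R ⧸ (⊤ : Ideal R)) :=
        Submodule.Quotient.subsingleton_iff.mpr rfl
      exact moduleLength_eq_zero
    | succ m ih =>
      rw [Finset.sum_range_succ, ← ih]
      have := lambda_step (Ideal.span {f ^ (m + 1)} ⊔ I) (f ^ m)
      rw [span_pow_sup_step] at this
      rw [this, add_comm]
  have hJr : Ideal.span {f ^ r} ⊔ I = I :=
    sup_eq_right.mpr (Ideal.span_le.mpr (Set.singleton_subset_iff.mpr hfr))
  have := key r
  rwa [hJr] at this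

end IdealLemmas

/-- **Theorem (characterization of equality).**
Let `(R, m)` be a Noetherian local ring, `I` an ideal of finite colength, `f ∈ R` with
`r = r_f(I) < ∞`, and let `φ_{f,I} : R/I → R/I` be multiplication by `f`.  Then
`ℓ(R/I) = r · ℓ(R/(⟨f⟩ + I))` holds if and only if
`ker(φ_{f,I}) = (⟨f^{r-1}⟩ + I)/I`, the image in `R/I` of the ideal generated by `f^{r-1}`. -/
theorem length_eq_rootIndex_mul_iff_ker
    (R : Type*) [CommRing R] [IsNoetherianRing R] [IsLocalRing R]
    (I : Ideal R) (hI : moduleLength R (R ⧸ I) ≠ ⊤)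
    (f : R) (hf : ∃ r : ℕ, 0 < r ∧ f ^ r ∈ I)
    (r : ℕ) (hr : r = sInf {r : ℕ | 0 < r ∧ f ^ r ∈ I})
    (φ : (R ⧸ I) →ₗ[R] (R ⧸ I))
    (hφ : ∀ g : R, φ (Ideal.Quotient.mk I g) = Ideal.Quotient.mk I (f * g)) :
    moduleLength R (R ⧸ I) = (r : ℕ∞) * moduleLength R (R ⧸ (Ideal.span {f} + I)) ↔
      LinearMap.ker φ = Submodule.map I.mkQ (Ideal.span {f ^ (r - 1)}) := by
  have hrS : 0 < r ∧ f ^ r ∈ I := hr ▸ Nat.sInf_mem hf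
  obtain ⟨hr1, hfr⟩ := hrS
  have hr1' : 1 ≤ r := hr1
  rw [Submodule.add_eq_sup]
  set L := moduleLength R (R ⧸ (Ideal.span {f} ⊔ I)) with hL
  set C : ℕ → Ideal R := fun k =>
    Submodule.colon (Ideal.span {f ^ (k + 1)} ⊔ I) (Ideal.span {f ^ k}) with hC
  have hsum : moduleLength R (R ⧸ I)
      = ∑ k ∈ Finset.range r, moduleLength R (R ⧸ C k) := lambda_sum I f r hfr
  have hIJ1 : I ≤ Ideal.span {f} ⊔ I := le_sup_right
  have hLfin : L ≠ ⊤ := fun h =>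
    hI (top_unique (h ▸ lambda_anti I (Ideal.span {f} ⊔ I) hIJ1))
  have hCkL : ∀ k, moduleLength R (R ⧸ C k) ≤ L := fun k =>
    lambda_anti (Ideal.span {f} ⊔ I) (C k) (hJ1C I f k)
  -- Step 1: length equality ↔ all colon ideals equal J1
  have step1 : moduleLength R (R ⧸ I) = (r : ℕ∞) * L ↔
      ∀ k, k < r → C k = Ideal.span {f} ⊔ I := by
    have hCfin : ∀ k, moduleLength R (R ⧸ C k) ≠ ⊤ :=
      fun k h => hLfin (top_unique (h ▸ hCkL k))
    set a : ℕ → ℕ := fun k => (moduleLength R (R ⧸ C k)).toNat with hadef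
    have ha : ∀ k, moduleLength R (R ⧸ C k) = (a k : ℕ∞) :=
      fun k => (ENat.coe_toNat (hCfin k)).symm
    set l : ℕ := L.toNat with hldef
    have hl : L = (l : ℕ∞) := (ENat.coe_toNat hLfin).symm
    have hal : ∀ k, a k ≤ l := by
      intro k
      have h1 := hCkL k
      rw [ha k, hl] at h1
      exact_mod_cast h1
    constructor
    · intro heq
      have hsum2 : ((∑ k ∈ Finset.range r, a k : ℕ) : ℕ∞) = ((r * l : ℕ) : ℕ∞) := by
        push_cast
        rw [← Finset.sum_congr rfl (fun k _ => ha k), ← hsum, heq, hl]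
      have hsum3 : ∑ k ∈ Finset.range r, a k = r * l := Nat.cast_injective hsum2
      have hall : ∀ k, k < r → a k = l := by
        intro k hk
        by_contra hne
        have hlt : a k < l := lt_of_le_of_ne (hal k) hne
        have : ∑ j ∈ Finset.range r, a j < ∑ _j ∈ Finset.range r, l :=
          Finset.sum_lt_sum (fun j _ => hal j) ⟨k, Finset.mem_range.mpr hk, hlt⟩
        rw [Finset.sum_const, Finset.card_range, smul_eq_mul, hsum3] at this
        exact lt_irrefl _ this
      intro k hk
      rcases (hJ1C I f k).lt_or_eq with hlt | heqk
      · exfalso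
        have h2 := lambda_strict (Ideal.span {f} ⊔ I) (C k) hlt hLfin
        rw [ha k, hall k hk, ← hl] at h2
        exact lt_irrefl _ h2
      · exact heqk.symm
    · intro hcond
      rw [hsum]
      have : ∀ k ∈ Finset.range r, moduleLength R (R ⧸ C k) = L := by
        intro k hk
        rw [hcond k (Finset.mem_range.mp hk)]
      rw [Finset.sum_congr rfl this, Finset.sum_const, Finset.card_range, nsmul_eq_mul]
  -- Step 2: all colon ideals equal J1 ↔ B
  have step2 : (∀ k, k < r → C k = Ideal.span {f} ⊔ I) ↔
      Submodule.colon I (Ideal.span {f}) ≤ Ideal.span {f ^ (r - 1)} ⊔ I := by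
    constructor
    · intro hcond
      exact alg3 I f r hr1' (fun k hk => le_of_eq (hcond k hk))
    · intro hB k hk
      exact le_antisymm (alg2 I f r hr1' hfr hB k hk) (hJ1C I f k)
  -- Step 3: B ↔ kernel description
  have step3 : (Submodule.colon I (Ideal.span {f}) ≤ Ideal.span {f ^ (r - 1)} ⊔ I) ↔
      LinearMap.ker φ = Submodule.map I.mkQ (Ideal.span {f ^ (r - 1)}) := by
    rw [ker_eq_map_colon I f φ hφ, ← map_span_sup_eq I (f ^ (r - 1))]
    constructor
    · intro hB
      exact congrArg _ (le_antisymm hB (hBI I f r hr1' hfr))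
    · intro hmap
      have hIC : I ≤ Submodule.colon I (Ideal.span {f}) := by
        intro x hx
        rw [← Ideal.submodule_span_eq, Submodule.mem_colon_span_singleton, smul_eq_mul]
        exact I.mul_mem_right f hx
      have := map_mkQ_inj I _ _ hIC le_sup_right hmap
      exact le_of_eq this
  rw [step1, step2, step3]
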